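/- Let i ≥ 2 be an integer, let T1 and T2 be rooted binary phylogenetic trees on the same taxon set X, and let f be a character using at most i states that attains d^i_MP(T1,T2), with l_f(T1) < l_f(T2). Then there exists a character f' using at most i states that attains d^i_MP(T1,T2), such that l_{f'}(T1) < l_{f'}(T2) and, for every internal vertex u of T1 both of whose children are leaves (i.e. the children form a cherry), f' assigns both children of u the same state. -/

import Mathlib

namespace MPDist

/-- A rooted binary phylogenetic tree: leaves are labelled by taxa,
every internal vertex (including the root) has exactly two children. -/
inductive PTree (X : Type) : Type
  | leaf : X → PTree X
  | node : PTree X → PTree X → PTree X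

namespace PTree

/-- The list of leaf labels (taxa) of a tree. -/
def leaves {X : Type} : PTree X → List X
  | .leaf x => [x]
  | .node l r => l.leaves ++ r.leaves

/-- Relabelling of taxa. -/
def map {X Y : Type} (φ : X → Y) : PTree X → PTree Y
  | .leaf x => .leaf (φ x)
  | .node l r => .node (l.map φ) (r.map φ)

end PTree

/-- `T` is a phylogenetic tree on the taxon set `X`:
its leaves are bijectively labelled by the elements of `X`. -/
def IsPhylo {X : Type} (T : PTree X) : Prop :=
  T.leaves.Nodup ∧ ∀ x : X, x ∈ T.leaves

/-- A state-labelled binary tree (an extension assigns a state to every vertex). -/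
inductive ETree (C : Type) : Type
  | leaf : C → ETree C
  | node : C → ETree C → ETree C → ETree C

namespace ETree

/-- The state at the root. -/
def root {C : Type} : ETree C → C
  | .leaf c => c
  | .node c _ _ => c

/-- The number of edges `{u,v}` with different states at the two endpoints
(substitutions/mutations). -/
def changes {C : Type} [DecidableEq C] : ETree C → ℕ
  | .leaf _ => 0
  | .node c l r =>
      ((if l.root = c then 0 else 1) + (if r.root = c then 0 else 1)) +
        (l.changes + r.changes)

end ETree

/-- `g` is an extension of the character `f` to the tree `T`: it has the same
shape as `T`, assigns a state to every vertex, and agrees with `f` on the taxa. -/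
inductive IsExtension {X C : Type} (f : X → C) : PTree X → ETree C → Prop
  | leaf (x : X) : IsExtension f (.leaf x) (.leaf (f x))
  | node {l r : PTree X} {gl gr : ETree C} (c : C) :
      IsExtension f l gl → IsExtension f r gr →
      IsExtension f (.node l r) (.node c gl gr)

/-- The parsimony score `l_f(T)`: the minimum number of mutation edges
over all extensions of `f` to `T`. -/
noncomputable def pscore {X C : Type} [DecidableEq C] (f : X → C) (T : PTree X) : ℕ :=
  sInf { k : ℕ | ∃ g : ETree C, IsExtension f T g ∧ g.changes = k }

/-- The MP distance `d_MP(T1,T2) = max_f |l_f(T1) − l_f(T2)|`, the maximum taken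
over all characters `f` on the taxon set (states drawn from `ℕ`). -/
noncomputable def dMP {X : Type} (T1 T2 : PTree X) : ℕ :=
  sSup { k : ℕ | ∃ f : X → ℕ, k = ((pscore f T1 : ℤ) - (pscore f T2 : ℤ)).natAbs }

/-- `d^i_MP(T1,T2)`: as `dMP`, but over characters using at most `i` states. -/
noncomputable def dMPk {X : Type} (i : ℕ) (T1 T2 : PTree X) : ℕ :=
  sSup { k : ℕ | ∃ f : X → Fin i, k = ((pscore f T1 : ℤ) - (pscore f T2 : ℤ)).natAbs }

/-- `max_f (l_f(T2) − l_f(T1))` over all characters `f`. -/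
noncomputable def maxDiff {X : Type} (T1 T2 : PTree X) : ℤ :=
  sSup { d : ℤ | ∃ f : X → ℕ, d = (pscore f T2 : ℤ) - (pscore f T1 : ℤ) }

/-- `max_f (l_f(T2) − l_f(T1))` over all characters `f` with at most `i` states. -/
noncomputable def maxDiffk {X : Type} (i : ℕ) (T1 T2 : PTree X) : ℤ :=
  sSup { d : ℤ | ∃ f : X → Fin i, d = (pscore f T2 : ℤ) - (pscore f T1 : ℤ) }

/-- `gap(T1,T2) = |max_f(l_f(T2)−l_f(T1)) − max_f(l_f(T1)−l_f(T2))|`. -/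
noncomputable def gap {X : Type} (T1 T2 : PTree X) : ℤ :=
  |maxDiff T1 T2 - maxDiff T2 T1|

/-- `gap` restricted to characters with at most `i` states. -/
noncomputable def gapk {X : Type} (i : ℕ) (T1 T2 : PTree X) : ℤ :=
  |maxDiffk i T1 T2 - maxDiffk i T2 T1|

/-- `s` occurs as a (rooted) subtree of `t`. -/
inductive IsSubtree {X : Type} : PTree X → PTree X → Prop
  | refl (t : PTree X) : IsSubtree t t
  | left {s l r : PTree X} : IsSubtree s l → IsSubtree s (.node l r)
  | right {s l r : PTree X} : IsSubtree s r → IsSubtree s (.node l r)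

/-- Taxa `a`, `b` form a cherry of `T`: they are leaves with a common parent. -/
def IsCherry {X : Type} (T : PTree X) (a b : X) : Prop :=
  IsSubtree (.node (.leaf a) (.leaf b)) T

/-- Relabel a tree on taxa `ℕ` by shifting all labels up by `s` (fresh copies). -/
def shiftT (s : ℕ) (T : PTree ℕ) : PTree ℕ := T.map (fun x => x + s)

/-- `T_a = (((((2,3),4),5),6),1)` on taxa `{1,…,6}` (taxon `j` encoded as `j-1`). -/
def Ta6 : PTree ℕ :=
  .node (.node (.node (.node (.node (.leaf 1) (.leaf 2)) (.leaf 3)) (.leaf 4)) (.leaf 5)) (.leaf 0)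

/-- `T_b = ((((2,6),(3,4)),5),1)` on taxa `{1,…,6}` (taxon `j` encoded as `j-1`). -/
def Tb6 : PTree ℕ :=
  .node (.node (.node (.node (.leaf 1) (.leaf 5)) (.node (.leaf 2) (.leaf 3))) (.leaf 4)) (.leaf 0)

/-- `T_A`: two disjoint copies of `T_a` joined under a new root (12 taxa). -/
def TA12 : PTree ℕ := .node Ta6 (shiftT 6 Ta6)

/-- `T_B`: two disjoint copies of `T_b` joined under a new root (12 taxa). -/
def TB12 : PTree ℕ := .node Tb6 (shiftT 6 Tb6)

/-- `TkA k` is the tree `T^{k+1}_A`: `k+1` disjoint copies of `T_A` arranged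
along a caterpillar backbone (so `TkA 0 = T^1_A = T_A`). -/
def TkA : ℕ → PTree ℕ
  | 0 => TA12
  | k+1 => .node (TkA k) (shiftT (12*(k+1)) TA12)

/-- `TkB k` is the tree `T^{k+1}_B`. -/
def TkB : ℕ → PTree ℕ
  | 0 => TB12
  | k+1 => .node (TkB k) (shiftT (12*(k+1)) TB12)

/-- `T_a = (((5,(6,4)),3),((1,(8,2)),7))` on taxa `{1,…,8}` (taxon `j` encoded as `j-1`). -/
def Ta8 : PTree ℕ :=
  .node (.node (.node (.leaf 4) (.node (.leaf 5) (.leaf 3))) (.leaf 2))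
        (.node (.node (.leaf 0) (.node (.leaf 7) (.leaf 1))) (.leaf 6))

/-- `T_b = (((7,((4,2),6)),3),(8,(1,5)))` on taxa `{1,…,8}` (taxon `j` encoded as `j-1`). -/
def Tb8 : PTree ℕ :=
  .node (.node (.node (.leaf 6) (.node (.node (.leaf 3) (.leaf 1)) (.leaf 5))) (.leaf 2))
        (.node (.leaf 7) (.node (.leaf 0) (.leaf 4)))

/-- `T_A` (2-state construction): two disjoint copies of `T_a` under a new root (16 taxa). -/
def TA16 : PTree ℕ := .node Ta8 (shiftT 8 Ta8)

/-- `T_B` (2-state construction): two disjoint copies of `T_b` under a new root (16 taxa). -/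
def TB16 : PTree ℕ := .node Tb8 (shiftT 8 Tb8)

/-- `T_AA`: two disjoint copies of `T_A` under a new root (32 taxa). -/
def TAA : PTree ℕ := .node TA16 (shiftT 16 TA16)

/-- `T_BB`: two disjoint copies of `T_B` under a new root (32 taxa). -/
def TBB : PTree ℕ := .node TB16 (shiftT 16 TB16)

/-- `TkAA k` is the tree `T^{k+1}_AA` (so `TkAA 0 = T^1_AA = T_AA`). -/
def TkAA : ℕ → PTree ℕ
  | 0 => TAA
  | k+1 => .node (TkAA k) (shiftT (32*(k+1)) TAA)

/-- `TkBB k` is the tree `T^{k+1}_BB`. -/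
def TkBB : ℕ → PTree ℕ
  | 0 => TBB
  | k+1 => .node (TkBB k) (shiftT (32*(k+1)) TBB)


section Aux

variable {X C : Type} [DecidableEq C]

/-- A canonical extension of a character. -/
def canonExt (f : X → C) : PTree X → ETree C
  | .leaf x => .leaf (f x)
  | .node l r => .node (canonExt f l).root (canonExt f l) (canonExt f r)

lemma canonExt_isExtension (f : X → C) (T : PTree X) :
    IsExtension f T (canonExt f T) := by
  induction T with
  | leaf x => exact .leaf x
  | node l r ihl ihr => exact .node _ ihl ihr

lemma pscore_le {f : X → C} {T : PTree X} {g : ETree C} (hg : IsExtension f T g) :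
    pscore f T ≤ g.changes :=
  Nat.sInf_le ⟨g, hg, rfl⟩

lemma exists_opt (f : X → C) (T : PTree X) :
    ∃ g, IsExtension f T g ∧ g.changes = pscore f T := by
  have h : {k : ℕ | ∃ g : ETree C, IsExtension f T g ∧ g.changes = k}.Nonempty :=
    ⟨_, canonExt f T, canonExt_isExtension f T, rfl⟩
  exact Nat.sInf_mem h

lemma root_node (c : C) (l r : ETree C) : (ETree.node c l r).root = c := rfl

lemma changes_node (c : C) (l r : ETree C) :
    (ETree.node c l r).changes =
      ((if l.root = c then 0 else 1) + (if r.root = c then 0 else 1)) +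
        (l.changes + r.changes) := rfl

/-- Number of edges of a tree. -/
def numEdges {X : Type} : PTree X → ℕ
  | .leaf _ => 0
  | .node l r => numEdges l + numEdges r + 2

lemma changes_le_numEdges {f : X → C} {T : PTree X} {g : ETree C}
    (hg : IsExtension f T g) : g.changes ≤ numEdges T := by
  induction hg with
  | leaf x => simp [ETree.changes, numEdges]
  | node c hl hr ihl ihr =>
      simp only [ETree.changes, numEdges]
      split_ifs <;> omega

lemma pscore_le_numEdges (f : X → C) (T : PTree X) : pscore f T ≤ numEdges T :=
  le_trans (pscore_le (canonExt_isExtension f T))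
    (changes_le_numEdges (canonExt_isExtension f T))

lemma tri (a b c : C) :
    (if a = c then (0:ℕ) else 1) ≤ (if a = b then 0 else 1) + (if b = c then 0 else 1) := by
  split_ifs <;> simp_all

lemma ext_congr {f f' : X → C} {T : PTree X} {g : ETree C}
    (hg : IsExtension f T g) (h : ∀ x ∈ T.leaves, f x = f' x) : IsExtension f' T g := by
  induction hg with
  | leaf x =>
      have hx : f x = f' x := h x (by simp [PTree.leaves])
      rw [hx]; exact .leaf x
  | node c hl hr ihl ihr =>
      exact .node c (ihl fun x hx => h x (by simp [PTree.leaves]; exact Or.inl hx))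
        (ihr fun x hx => h x (by simp [PTree.leaves]; exact Or.inr hx))

lemma subtree_leaves_subset {s T : PTree X} (h : IsSubtree s T) :
    ∀ x ∈ s.leaves, x ∈ T.leaves := by
  induction h with
  | refl => exact fun x hx => hx
  | left h ih => exact fun x hx => by simp [PTree.leaves]; exact Or.inl (ih x hx)
  | right h ih => exact fun x hx => by simp [PTree.leaves]; exact Or.inr (ih x hx)

/-- Changing a character changes any optimal extension's number of changes by at most
the number of leaves where the characters differ. -/
lemma transfer [DecidableEq X] {f f' : X → C} :
    ∀ {T : PTree X} {g' : ETree C}, IsExtension f' T g' →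
    ∃ g, IsExtension f T g ∧
      g.changes + (if g.root = g'.root then 0 else 1) ≤
        g'.changes + (T.leaves.filter (fun x => f x ≠ f' x)).length := by
  intro T
  induction T with
  | leaf x =>
      intro g' hg'
      cases hg'
      refine ⟨.leaf (f x), .leaf x, ?_⟩
      by_cases h : f x = f' x <;>
        simp [ETree.changes, ETree.root, PTree.leaves, List.filter, h]
  | node l r ihl ihr =>
      intro g' hg'
      cases hg' with
      | node c hgl' hgr' =>
        rename_i gl' gr'
        obtain ⟨gl, hgl, hl1⟩ := ihl hgl'
        obtain ⟨gr, hgr, hr1⟩ := ihr hgr'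
        refine ⟨.node c gl gr, .node c hgl hgr, ?_⟩
        simp only [changes_node, root_node, PTree.leaves, List.filter_append,
          List.length_append, eq_self_iff_true, if_true]
        have t1 := tri gl.root gl'.root c
        have t2 := tri gr.root gr'.root c
        omega

lemma pscore_update_le [DecidableEq X] {f f' : X → C} (T : PTree X) :
    pscore f T ≤ pscore f' T + (T.leaves.filter (fun x => f x ≠ f' x)).length := by
  obtain ⟨g', hg', heq⟩ := exists_opt f' T
  obtain ⟨g, hg, hle⟩ := transfer (f := f) hg'
  have := pscore_le hg
  split_ifs at hle <;> omega

lemma length_le_one_of_all_eq {α : Type} {b : α} :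
    ∀ {l : List α}, l.Nodup → (∀ x ∈ l, x = b) → l.length ≤ 1
  | [], _, _ => by simp
  | [x], _, _ => by simp
  | x :: y :: t, h, hb => by
      exfalso
      have hx : x = b := hb x (by simp)
      have hy : y = b := hb y (by simp)
      subst hx; subst hy
      simp [List.nodup_cons] at h

/-- The key step: monochromatizing one bichromatic cherry strictly decreases the
parsimony score. -/
lemma cherry_step [DecidableEq X] {f : X → C} {a b : X} (hne : f a ≠ f b) :
    ∀ {T : PTree X}, IsSubtree (.node (.leaf a) (.leaf b)) T → T.leaves.Nodup →
    ∀ {g : ETree C}, IsExtension f T g →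
    ∃ f' : X → C,
      (f' = Function.update f b (f a) ∨ f' = Function.update f a (f b)) ∧
      ∃ g', IsExtension f' T g' ∧
        g'.changes + (if g'.root = g.root then 0 else 1) < g.changes := by
  have hab : a ≠ b := fun h => hne (h ▸ rfl)
  suffices H : ∀ (s T : PTree X), IsSubtree s T → s = .node (.leaf a) (.leaf b) →
      T.leaves.Nodup → ∀ {g : ETree C}, IsExtension f T g →
      ∃ f' : X → C,
        (f' = Function.update f b (f a) ∨ f' = Function.update f a (f b)) ∧
        ∃ g', IsExtension f' T g' ∧
          g'.changes + (if g'.root = g.root then 0 else 1) < g.changes by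
    intro T hch; exact H _ T hch rfl
  intro s T hch
  induction hch with
  | refl =>
      intro hs _ g hg
      subst hs
      cases hg with
      | node c hgl hgr =>
        cases hgl; cases hgr
        have hfa : Function.update f b (f a) a = f a := Function.update_of_ne hab _ _
        have hfb : Function.update f b (f a) b = f a := Function.update_self _ _ _
        have hfa' : Function.update f a (f b) a = f b := Function.update_self _ _ _
        have hfb' : Function.update f a (f b) b = f b :=
          Function.update_of_ne (Ne.symm hab) _ _
        by_cases h1 : c = f a
        · refine ⟨Function.update f b (f a), Or.inl rfl,
            .node c (.leaf (f a)) (.leaf (f a)), ?_, ?_⟩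
          · have := IsExtension.node (f := Function.update f b (f a)) c
              (IsExtension.leaf a) (IsExtension.leaf b)
            rwa [hfa, hfb] at this
          · subst h1
            simp [ETree.changes, ETree.root, Ne.symm hne]
        · by_cases h2 : c = f b
          · refine ⟨Function.update f a (f b), Or.inr rfl,
              .node c (.leaf (f b)) (.leaf (f b)), ?_, ?_⟩
            · have := IsExtension.node (f := Function.update f a (f b)) c
                (IsExtension.leaf a) (IsExtension.leaf b)
              rwa [hfa', hfb'] at this
            · subst h2
              simp [ETree.changes, ETree.root, hne]
          · refine ⟨Function.update f b (f a), Or.inl rfl,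
              .node (f a) (.leaf (f a)) (.leaf (f a)), ?_, ?_⟩
            · have := IsExtension.node (f := Function.update f b (f a)) (f a)
                (IsExtension.leaf a) (IsExtension.leaf b)
              rwa [hfa, hfb] at this
            · have h1' : f a ≠ c := fun h => h1 h.symm
              have h2' : f b ≠ c := fun h => h2 h.symm
              simp [ETree.changes, ETree.root, h1', h2']
  | left hsub ih =>
      rename_i s l r
      intro hs hnd g hg
      cases hg with
      | node c hgl hgr =>
        rename_i gl gr
        subst hs
        rw [PTree.leaves, List.nodup_append] at hnd
        obtain ⟨hndl, _, hdisj⟩ := hnd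
        obtain ⟨f', hf', gl', hext, hlt⟩ := ih rfl hndl hgl
        have ha : a ∈ l.leaves := subtree_leaves_subset hsub a (by simp [PTree.leaves])
        have hb : b ∈ l.leaves := subtree_leaves_subset hsub b (by simp [PTree.leaves])
        have hagree : ∀ x ∈ r.leaves, f x = f' x := by
          intro x hx
          have hxa : x ≠ a := fun h => hdisj _ ha _ hx h.symm
          have hxb : x ≠ b := fun h => hdisj _ hb _ hx h.symm
          rcases hf' with rfl | rfl
          · exact (Function.update_of_ne hxb _ _).symm
          · exact (Function.update_of_ne hxa _ _).symm
        refine ⟨f', hf', .node c gl' gr, .node c hext (ext_congr hgr hagree), ?_⟩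
        simp only [changes_node, root_node, eq_self_iff_true, if_true]
        have t1 := tri gl'.root gl.root c
        omega
  | right hsub ih =>
      rename_i s l r
      intro hs hnd g hg
      cases hg with
      | node c hgl hgr =>
        rename_i gl gr
        subst hs
        rw [PTree.leaves, List.nodup_append] at hnd
        obtain ⟨_, hndr, hdisj⟩ := hnd
        obtain ⟨f', hf', gr', hext, hlt⟩ := ih rfl hndr hgr
        have ha : a ∈ r.leaves := subtree_leaves_subset hsub a (by simp [PTree.leaves])
        have hb : b ∈ r.leaves := subtree_leaves_subset hsub b (by simp [PTree.leaves])
        have hagree : ∀ x ∈ l.leaves, f x = f' x := by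
          intro x hx
          have hxa : x ≠ a := fun h => hdisj _ hx _ ha h
          have hxb : x ≠ b := fun h => hdisj _ hx _ hb h
          rcases hf' with rfl | rfl
          · exact (Function.update_of_ne hxb _ _).symm
          · exact (Function.update_of_ne hxa _ _).symm
        refine ⟨f', hf', .node c gl gr', .node c (ext_congr hgl hagree) hext, ?_⟩
        simp only [changes_node, root_node, eq_self_iff_true, if_true]
        have t1 := tri gr'.root gr.root c
        omega

end Aux

/-- the cherry-monochromatization of Statement 1 also holds for
optimal characters under the bounded-state model `d^i_MP` (`i ≥ 2`). -/
theorem optimal_monochromatic_cherries_bounded {X : Type} (i : ℕ) (hi : 2 ≤ i)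
    (T1 T2 : PTree X) (h1 : IsPhylo T1) (h2 : IsPhylo T2) (f : X → Fin i)
    (hopt : ((pscore f T1 : ℤ) - (pscore f T2 : ℤ)).natAbs = dMPk i T1 T2)
    (hlt : pscore f T1 < pscore f T2) :
    ∃ f' : X → Fin i,
      ((pscore f' T1 : ℤ) - (pscore f' T2 : ℤ)).natAbs = dMPk i T1 T2 ∧
      pscore f' T1 < pscore f' T2 ∧
      ∀ a b : X, IsCherry T1 a b → f' a = f' b := by
  classical
  have hbdd : BddAbove {k : ℕ | ∃ f : X → Fin i,
      k = ((pscore f T1 : ℤ) - (pscore f T2 : ℤ)).natAbs} := by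
    refine ⟨numEdges T1 + numEdges T2, ?_⟩
    rintro k ⟨f, rfl⟩
    have hb1 := pscore_le_numEdges f T1
    have hb2 := pscore_le_numEdges f T2
    omega
  have key : ∀ n (f : X → Fin i), pscore f T1 < n →
      ((pscore f T1 : ℤ) - (pscore f T2 : ℤ)).natAbs = dMPk i T1 T2 →
      pscore f T1 < pscore f T2 →
      ∃ f' : X → Fin i,
        ((pscore f' T1 : ℤ) - (pscore f' T2 : ℤ)).natAbs = dMPk i T1 T2 ∧
        pscore f' T1 < pscore f' T2 ∧
        ∀ a b : X, IsCherry T1 a b → f' a = f' b := by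
    intro n
    induction n with
    | zero => intro f hle; omega
    | succ n ih =>
      intro f hle hopt hlt
      by_cases hC : ∃ a b : X, IsCherry T1 a b ∧ f a ≠ f b
      · obtain ⟨a, b, hch, hne⟩ := hC
        obtain ⟨g, hg, hgch⟩ := exists_opt f T1
        obtain ⟨f', hdisj, g', hext, hlt'⟩ := cherry_step hne hch h1.1 hg
        have hT1 : pscore f' T1 < pscore f T1 := by
          have h01 := pscore_le hext
          split_ifs at hlt' <;> omega
        have hfilt : (T2.leaves.filter (fun x => f x ≠ f' x)).length ≤ 1 := by
          rcases hdisj with rfl | rfl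
          · refine length_le_one_of_all_eq (b := b) (h2.1.filter _) ?_
            intro x hx
            rw [List.mem_filter] at hx
            by_contra hxb
            have : f x = Function.update f b (f a) x := (Function.update_of_ne hxb _ _).symm
            simp [this] at hx
          · refine length_le_one_of_all_eq (b := a) (h2.1.filter _) ?_
            intro x hx
            rw [List.mem_filter] at hx
            by_contra hxa
            have : f x = Function.update f a (f b) x := (Function.update_of_ne hxa _ _).symm
            simp [this] at hx
        have hT2 : pscore f T2 ≤ pscore f' T2 + 1 := by
          have := pscore_update_le (f := f) (f' := f') T2
          omega
        have hlt'' : pscore f' T1 < pscore f' T2 := by omega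
        have hmem : ((pscore f' T1 : ℤ) - (pscore f' T2 : ℤ)).natAbs ∈
            {k : ℕ | ∃ f : X → Fin i,
              k = ((pscore f T1 : ℤ) - (pscore f T2 : ℤ)).natAbs} := ⟨f', rfl⟩
        have hle' : ((pscore f' T1 : ℤ) - (pscore f' T2 : ℤ)).natAbs ≤ dMPk i T1 T2 :=
          le_csSup hbdd hmem
        have hge : dMPk i T1 T2 ≤ ((pscore f' T1 : ℤ) - (pscore f' T2 : ℤ)).natAbs := by
          rw [← hopt]; omega
        exact ih f' (by omega) (le_antisymm hle' hge) hlt''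
      · push_neg at hC
        exact ⟨f, hopt, hlt, hC⟩
  exact key (pscore f T1 + 1) f (by omega) hopt hlt

end MPDist
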